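/- Let Ω be an open connected domain in ℝⁿ and u ∈ C²(Ω) a strictly positive solution of Δu + f(u) = 0 in Ω, where f : (0,∞) → ℝ satisfies f(t) ≥ λ t for all t > 0 with λ > 0. Let R_λ be the radius such that the first Dirichlet eigenvalue of the Laplacian on a ball of radius R_λ equals λ. Then Ω does not contain any closed ball of radius R_λ. -/

import Mathlib

open scoped RealInnerProductSpace
noncomputable section

/-- The Laplacian of `u : ℝⁿ → ℝ`, as the sum of second partial derivatives. -/
def lap {n : ℕ} (u : EuclideanSpace ℝ (Fin n) → ℝ) (x : EuclideanSpace ℝ (Fin n)) : ℝ :=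
  ∑ i, fderiv ℝ (fun y => fderiv ℝ u y (EuclideanSpace.single i 1)) x (EuclideanSpace.single i 1)

/-- `R` is a radius such that the first Dirichlet eigenvalue of the Laplacian on a ball of
radius `R` in `ℝⁿ` equals `lam`: there is a positive eigenfunction with eigenvalue `lam`
vanishing on the boundary. -/
def IsFirstEigRadius (n : ℕ) (R lam : ℝ) : Prop :=
  0 < R ∧ ∃ v : EuclideanSpace ℝ (Fin n) → ℝ, ContDiff ℝ 2 v ∧
    (∀ x ∈ Metric.ball (0 : EuclideanSpace ℝ (Fin n)) R, 0 < v x) ∧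
    (∀ x ∈ Metric.sphere (0 : EuclideanSpace ℝ (Fin n)) R, v x = 0) ∧
    (∀ x ∈ Metric.closedBall (0 : EuclideanSpace ℝ (Fin n)) R, lap v x + lam * v x = 0)

open Metric Filter Set

/-- Second derivative test (1D): at a local minimum the second derivative is nonnegative. -/
lemma aux_second_deriv_nonneg (g : ℝ → ℝ) (d : ℝ)
    (hg : ∀ᶠ t in nhds (0:ℝ), DifferentiableAt ℝ g t)
    (hd : HasDerivAt (deriv g) d 0)
    (hmin : IsLocalMin g 0) : 0 ≤ d := by
  by_contra hneg
  push_neg at hneg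
  have h0 : deriv g 0 = 0 := hmin.deriv_eq_zero
  have hslope : Tendsto (slope (deriv g) 0) (nhdsWithin 0 {(0:ℝ)}ᶜ) (nhds d) :=
    hasDerivAt_iff_tendsto_slope.1 hd
  have hslope' : Tendsto (slope (deriv g) 0) (nhdsWithin 0 (Set.Ioi 0)) (nhds d) :=
    hslope.mono_left (nhdsWithin_mono _ (fun t ht => ne_of_gt ht))
  have h1 : ∀ᶠ t in nhdsWithin (0:ℝ) (Set.Ioi 0), slope (deriv g) 0 t < d/2 :=
    hslope'.eventually_lt_const (by linarith)
  have h1' : ∀ᶠ t in nhdsWithin (0:ℝ) (Set.Ioi 0), deriv g t < 0 := by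
    filter_upwards [h1, self_mem_nhdsWithin] with t hs ht
    rw [slope_def_field, h0] at hs
    have ht0 : (0:ℝ) < t := ht
    have : deriv g t < (d/2) * t := by
      have := (div_lt_iff₀ ht0).1 (by simpa using hs)
      linarith
    nlinarith
  have h2 : ∀ᶠ t in nhdsWithin (0:ℝ) (Set.Ioi 0), DifferentiableAt ℝ g t :=
    hg.filter_mono nhdsWithin_le_nhds
  have h3 : ∀ᶠ t in nhdsWithin (0:ℝ) (Set.Ioi 0), g 0 ≤ g t :=
    hmin.filter_mono nhdsWithin_le_nhds
  obtain ⟨ε, hε, hsub⟩ := mem_nhdsGT_iff_exists_Ioc_subset.1 ((h1'.and h2).and h3)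
  have hε0 : (0:ℝ) < ε := hε
  have hcont : ContinuousOn g (Set.Icc 0 ε) := by
    intro t ht
    rcases eq_or_lt_of_le ht.1 with h | h
    · rw [← h]
      exact hg.self_of_nhds.continuousAt.continuousWithinAt
    · exact ((hsub ⟨h, ht.2⟩).1.2).continuousAt.continuousWithinAt
  have hderiv : ∀ t ∈ interior (Set.Icc (0:ℝ) ε), deriv g t < 0 := by
    intro t ht
    rw [interior_Icc] at ht
    exact (hsub ⟨ht.1, ht.2.le⟩).1.1
  have hanti := strictAntiOn_of_deriv_neg (convex_Icc 0 ε) hcont hderiv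
  have hlt : g ε < g 0 := hanti ⟨le_refl 0, hε0.le⟩ ⟨hε0.le, le_refl ε⟩ hε0
  have hge : g 0 ≤ g ε := (hsub ⟨hε0, le_refl ε⟩).2
  linarith

/-- At an interior local minimum each second directional derivative is nonnegative. -/
lemma aux_dd_nonneg {E : Type*} [NormedAddCommGroup E] [NormedSpace ℝ E]
    (w : E → ℝ) (x0 e : E)
    (hw : ∀ᶠ y in nhds x0, DifferentiableAt ℝ w y)
    (hw2 : DifferentiableAt ℝ (fun y => fderiv ℝ w y e) x0)
    (hmin : IsLocalMin w x0) :
    0 ≤ fderiv ℝ (fun y => fderiv ℝ w y e) x0 e := by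
  set L : ℝ → E := fun t => x0 + t • e with hLdef
  have hLd : ∀ t : ℝ, HasDerivAt L e t := fun t => by
    have := ((hasDerivAt_id t).smul_const e).const_add x0; rw [one_smul] at this; exact this
  have hL0 : L 0 = x0 := by simp [hLdef]
  have htend : Tendsto L (nhds 0) (nhds x0) := by
    have hLc : Continuous L := by continuity
    exact hL0 ▸ hLc.continuousAt (x := (0:ℝ))
  set g : ℝ → ℝ := fun t => w (L t) with hgdef
  have hge : ∀ᶠ t in nhds (0:ℝ), DifferentiableAt ℝ w (L t) := htend.eventually hw
  have hg : ∀ᶠ t in nhds (0:ℝ), DifferentiableAt ℝ g t := by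
    filter_upwards [hge] with t ht
    exact (ht.hasFDerivAt.comp_hasDerivAt t (hLd t)).differentiableAt
  have hderiv_g : ∀ᶠ t in nhds (0:ℝ), deriv g t = fderiv ℝ w (L t) e := by
    filter_upwards [hge] with t ht
    exact (ht.hasFDerivAt.comp_hasDerivAt t (hLd t)).deriv
  have hF : HasDerivAt (fun t => fderiv ℝ w (L t) e)
      (fderiv ℝ (fun y => fderiv ℝ w y e) x0 e) 0 := by
    have hw2' : HasFDerivAt (fun y => fderiv ℝ w y e)
        (fderiv ℝ (fun y => fderiv ℝ w y e) x0) (L 0) := by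
      rw [hL0]; exact hw2.hasFDerivAt
    exact hw2'.comp_hasDerivAt 0 (hLd 0)
  have hd : HasDerivAt (deriv g) (fderiv ℝ (fun y => fderiv ℝ w y e) x0 e) 0 := by
    rw [Filter.EventuallyEq.hasDerivAt_iff hderiv_g]
    exact hF
  have hming : IsLocalMin g 0 := by
    have := htend.eventually hmin
    simpa [IsLocalMin, IsMinFilter, hgdef, hL0] using this
  exact aux_second_deriv_nonneg g _ hg hd hming

/-- Chain rule for second directional derivatives under the affine map `y ↦ c • (y - p)`. -/
lemma aux_dd_affine {E : Type*} [NormedAddCommGroup E] [NormedSpace ℝ E]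
    (v : E → ℝ) (hv : ContDiff ℝ 2 v) (c : ℝ) (p x e : E) :
    fderiv ℝ (fun y => fderiv ℝ (fun z => v (c • (z - p))) y e) x e
      = c^2 * fderiv ℝ (fun z => fderiv ℝ v z e) (c • (x - p)) e := by
  set A : E → E := fun y => c • (y - p) with hAdef
  have hA : ∀ y, HasFDerivAt A (c • ContinuousLinearMap.id ℝ E) y := fun y => by
    exact ((hasFDerivAt_id y).sub_const p).const_smul c
  have hvd : Differentiable ℝ v := hv.differentiable (by norm_num)
  have step1 : ∀ y, fderiv ℝ (fun z => v (c • (z - p))) y e = c * fderiv ℝ v (A y) e := by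
    intro y
    have h := (hvd (A y)).hasFDerivAt.comp y (hA y)
    have := h.fderiv
    rw [show (fun z => v (c • (z - p))) = v ∘ A from rfl, this]
    simp [map_smul, smul_eq_mul]
  have hF : Differentiable ℝ (fun z => fderiv ℝ v z e) :=
    ((hv.fderiv_right (m := 1) (by norm_num)).clm_apply contDiff_const).differentiable one_ne_zero
  have heq : (fun y => fderiv ℝ (fun z => v (c • (z - p))) y e)
      = fun y => c * (fun z => fderiv ℝ v z e) (A y) := funext step1
  rw [heq]
  have hFA : HasFDerivAt (fun y => (fun z => fderiv ℝ v z e) (A y))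
      ((fderiv ℝ (fun z => fderiv ℝ v z e) (A x)).comp (c • ContinuousLinearMap.id ℝ E)) x :=
    (hF (A x)).hasFDerivAt.comp x (hA x)
  have h2 := (hFA.const_mul c).fderiv
  rw [h2]
  simp [map_smul, smul_eq_mul]
  ring

/-- If `Ω ⊆ ℝⁿ` is an open connected domain carrying a positive `C²` solution of
`Δu + f(u) = 0` with `f(t) ≥ λ t` for `t > 0`, `λ > 0`, then `Ω` contains no closed ball of
radius `R_λ`. -/
theorem stmt0 {n : ℕ} (Ω : Set (EuclideanSpace ℝ (Fin n))) (hΩo : IsOpen Ω)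
    (hΩc : IsConnected Ω) (f : ℝ → ℝ) (lam : ℝ) (hlam : 0 < lam)
    (hf : ∀ t : ℝ, 0 < t → lam * t ≤ f t)
    (u : EuclideanSpace ℝ (Fin n) → ℝ) (hu : ContDiffOn ℝ 2 u Ω)
    (hupos : ∀ x ∈ Ω, 0 < u x)
    (hueq : ∀ x ∈ Ω, lap u x + f (u x) = 0)
    (Rlam : ℝ) (hR : IsFirstEigRadius n Rlam lam) :
    ∀ p, ¬ Metric.closedBall p Rlam ⊆ Ω := by
  obtain ⟨hRpos, v, hv, hvpos, hvbd, hveq⟩ := hR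
  intro p hball
  obtain ⟨δ, hδ, hsub⟩ := (isCompact_closedBall p Rlam).exists_cthickening_subset_open hΩo hball
  set r : ℝ := δ + Rlam with hrdef
  have hKsub : Metric.closedBall p r ⊆ Ω := by
    rw [hrdef, ← cthickening_closedBall hδ.le hRpos.le p]
    exact hsub
  have hrpos : 0 < r := by positivity
  have hRr : Rlam < r := by rw [hrdef]; linarith
  set c : ℝ := Rlam / r with hcdef
  have hc0 : 0 < c := div_pos hRpos hrpos
  have hc1 : c < 1 := (div_lt_one hrpos).2 hRr
  set A : EuclideanSpace ℝ (Fin n) → EuclideanSpace ℝ (Fin n) := fun x => c • (x - p) with hAdef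
  have hcr : c * r = Rlam := div_mul_cancel₀ Rlam hrpos.ne'
  have hAmem : ∀ x ∈ Metric.closedBall p r, A x ∈ Metric.closedBall (0:EuclideanSpace ℝ (Fin n)) Rlam := by
    intro x hx
    rw [Metric.mem_closedBall, dist_eq_norm, sub_zero, hAdef]
    rw [Metric.mem_closedBall, dist_eq_norm] at hx
    calc ‖c • (x - p)‖ = c * ‖x - p‖ := by rw [norm_smul, Real.norm_eq_abs, abs_of_pos hc0]
    _ ≤ c * r := by nlinarith
    _ = Rlam := hcr
  have hAmem' : ∀ x ∈ Metric.ball p r, A x ∈ Metric.ball (0:EuclideanSpace ℝ (Fin n)) Rlam := by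
    intro x hx
    rw [Metric.mem_ball, dist_eq_norm, sub_zero, hAdef]
    rw [Metric.mem_ball, dist_eq_norm] at hx
    calc ‖c • (x - p)‖ = c * ‖x - p‖ := by rw [norm_smul, Real.norm_eq_abs, abs_of_pos hc0]
    _ < c * r := by nlinarith
    _ = Rlam := hcr
  set vs : EuclideanSpace ℝ (Fin n) → ℝ := fun x => v (A x) with hvsdef
  have hAc : ContDiff ℝ 2 A := ((contDiff_id.sub contDiff_const).const_smul c)
  have hvsC : ContDiff ℝ 2 vs := hv.comp hAc
  set K := Metric.closedBall p r with hKdef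
  have hK : IsCompact K := isCompact_closedBall p r
  have hpK : p ∈ K := Metric.mem_closedBall_self hrpos.le
  have hKne : K.Nonempty := ⟨p, hpK⟩
  have hune : ∀ x ∈ K, u x ≠ 0 := fun x hx => (hupos x (hKsub hx)).ne'
  set h : EuclideanSpace ℝ (Fin n) → ℝ := fun x => vs x / u x with hhdef
  have hhcont : ContinuousOn h K :=
    (hvsC.continuous.continuousOn.div (hu.continuousOn.mono hKsub) hune)
  obtain ⟨x0, hx0K, hx0max⟩ := hK.exists_isMaxOn hKne hhcont
  have hx0Ω : x0 ∈ Ω := hKsub hx0K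
  have hu0 : 0 < u x0 := hupos x0 hx0Ω
  have hAp : A p = 0 := by simp [hAdef]
  have hvp : 0 < vs p := by
    rw [hvsdef]; simp only; rw [hAp]
    exact hvpos 0 (by simp [Metric.mem_ball, hRpos])
  have hhp : 0 < h p := div_pos hvp (hupos p (hKsub hpK))
  have hT : 0 < h x0 := lt_of_lt_of_le hhp (hx0max hpK)
  have hx0ball : x0 ∈ Metric.ball p r := by
    by_contra hxb
    have hd : dist x0 p = r := by
      rw [Metric.mem_closedBall] at hx0K
      rw [Metric.mem_ball] at hxb
      linarith [lt_or_eq_of_le hx0K, not_lt.1 hxb]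
    have hsp : A x0 ∈ Metric.sphere (0:EuclideanSpace ℝ (Fin n)) Rlam := by
      rw [Metric.mem_sphere, dist_eq_norm, sub_zero, hAdef]
      calc ‖c • (x0 - p)‖ = c * ‖x0 - p‖ := by rw [norm_smul, Real.norm_eq_abs, abs_of_pos hc0]
      _ = c * r := by rw [← dist_eq_norm, hd]
      _ = Rlam := hcr
    have : vs x0 = 0 := hvbd _ hsp
    rw [hhdef] at hT
    simp only at hT
    rw [this] at hT
    simp at hT
  set T : ℝ := h x0 with hTdef
  have hvs0 : vs x0 = T * u x0 := by
    rw [hTdef, hhdef]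
    field_simp
  set w : EuclideanSpace ℝ (Fin n) → ℝ := fun x => u x - T⁻¹ * vs x with hwdef
  have hw0 : w x0 = 0 := by
    rw [hwdef]; simp only; rw [hvs0]
    field_simp
    ring
  have hwnonneg : ∀ x ∈ K, 0 ≤ w x := by
    intro x hx
    have hux : 0 < u x := hupos x (hKsub hx)
    have hhx : h x ≤ T := hx0max hx
    have hvx : vs x ≤ T * u x := by
      rw [hhdef] at hhx
      simp only at hhx
      exact (div_le_iff₀ hux).1 hhx
    rw [hwdef]
    simp only
    have : T⁻¹ * vs x ≤ T⁻¹ * (T * u x) := by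
      apply mul_le_mul_of_nonneg_left hvx (inv_nonneg.2 hT.le)
    have hTT : T⁻¹ * (T * u x) = u x := by field_simp
    linarith
  have hmin : IsLocalMin w x0 := by
    have hmem : Metric.ball p r ∈ nhds x0 := Metric.isOpen_ball.mem_nhds hx0ball
    refine Filter.eventually_of_mem hmem fun x hx => ?_
    rw [hw0]
    exact hwnonneg x (Metric.ball_subset_closedBall hx)
  -- differentiability facts
  have hΩnhds : Ω ∈ nhds x0 := hΩo.mem_nhds hx0Ω
  have hudiff : ∀ y ∈ Ω, DifferentiableAt ℝ u y := fun y hy =>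
    (hu.contDiffAt (hΩo.mem_nhds hy)).differentiableAt (by norm_num)
  have hvsdiff : Differentiable ℝ vs := hvsC.differentiable (by norm_num)
  have hu2 : ContDiffAt ℝ 2 u x0 := hu.contDiffAt hΩnhds
  have key : ∀ e : EuclideanSpace ℝ (Fin n),
      0 ≤ fderiv ℝ (fun y => fderiv ℝ u y e) x0 e
          - T⁻¹ * fderiv ℝ (fun y => fderiv ℝ vs y e) x0 e := by
    intro e
    have hFu : DifferentiableAt ℝ (fun y => fderiv ℝ u y e) x0 :=
      ((hu2.fderiv_right (m := 1) (by norm_num)).clm_apply contDiffAt_const).differentiableAt one_ne_zero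
    have hFvs : DifferentiableAt ℝ (fun y => fderiv ℝ vs y e) x0 :=
      (((hvsC.fderiv_right (m := 1) (by norm_num)).clm_apply contDiff_const).differentiable one_ne_zero) x0
    have hweq : (fun y => fderiv ℝ w y e)
        =ᶠ[nhds x0] fun y => fderiv ℝ u y e - T⁻¹ * fderiv ℝ vs y e := by
      refine Filter.eventually_of_mem hΩnhds fun y hy => ?_
      have hu' := (hudiff y hy).hasFDerivAt
      have hv2 : HasFDerivAt (fun x => T⁻¹ * vs x) (T⁻¹ • fderiv ℝ vs y) y :=
        ((hvsdiff y).hasFDerivAt).const_mul T⁻¹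
      have hw' : HasFDerivAt w (fderiv ℝ u y - T⁻¹ • fderiv ℝ vs y) y := hu'.sub hv2
      show fderiv ℝ w y e = fderiv ℝ u y e - T⁻¹ * fderiv ℝ vs y e
      rw [hw'.fderiv]
      simp [smul_eq_mul]
    have hsum_diff : DifferentiableAt ℝ
        (fun y => fderiv ℝ u y e - T⁻¹ * fderiv ℝ vs y e) x0 :=
      hFu.sub (hFvs.const_mul T⁻¹)
    have hw2 : DifferentiableAt ℝ (fun y => fderiv ℝ w y e) x0 :=
      (hweq.differentiableAt_iff).2 hsum_diff
    have hwd : ∀ᶠ y in nhds x0, DifferentiableAt ℝ w y := by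
      refine Filter.eventually_of_mem hΩnhds fun y hy => ?_
      exact (hudiff y hy).sub ((hvsdiff y).const_mul T⁻¹)
    have hnn := aux_dd_nonneg w x0 e hwd hw2 hmin
    have heq2 : fderiv ℝ (fun y => fderiv ℝ w y e) x0 e
        = fderiv ℝ (fun y => fderiv ℝ u y e) x0 e
          - T⁻¹ * fderiv ℝ (fun y => fderiv ℝ vs y e) x0 e := by
      rw [hweq.fderiv_eq]
      rw [fderiv_fun_sub hFu (hFvs.const_mul T⁻¹), fderiv_const_mul hFvs T⁻¹]
      simp [smul_eq_mul]
    rw [heq2] at hnn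
    exact hnn
  have hsumkey : 0 ≤ lap u x0 - T⁻¹ * lap vs x0 := by
    have := Finset.sum_nonneg (fun i (_ : i ∈ Finset.univ) =>
      key (EuclideanSpace.single i 1))
    rw [Finset.sum_sub_distrib] at this
    rw [← Finset.mul_sum] at this
    exact this
  have hlapvs : lap vs x0 = c^2 * lap v (A x0) := by
    rw [lap, lap, Finset.mul_sum]
    apply Finset.sum_congr rfl
    intro i _
    exact aux_dd_affine v hv c p x0 (EuclideanSpace.single i 1)
  have hlapv : lap v (A x0) = -(lam * v (A x0)) := by
    have := hveq (A x0) (hAmem x0 hx0K)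
    linarith
  have hlapu : lap u x0 = -(f (u x0)) := by
    have := hueq x0 hx0Ω
    linarith
  have hvA : v (A x0) = T * u x0 := by
    rw [← hvs0]
  have hfu : lam * u x0 ≤ f (u x0) := hf (u x0) hu0
  rw [hlapu, hlapvs, hlapv, hvA] at hsumkey
  have hTinv : T⁻¹ * T = 1 := inv_mul_cancel₀ hT.ne'
  have hc2 : c^2 < 1 := pow_lt_one₀ hc0.le hc1 (by norm_num)
  have hrw : T⁻¹ * (c ^ 2 * -(lam * (T * u x0))) = -(c ^ 2 * (lam * u x0)) := by
    field_simp
  rw [hrw] at hsumkey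
  nlinarith [mul_pos hlam hu0, hc2, hfu]
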